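/- Let M₀ and M₁ be finite matroids on E. Then there exists a common independent set I ∈ ℐ(M₀) ∩ ℐ(M₁) and a partition E = E₀ ⊔ E₁ such that I ∩ Eᵢ spans Eᵢ in Mᵢ for i ∈ {0,1}. -/

import Mathlib

open Set Matroid
open scoped Matroid

namespace MIAux

variable {α : Type*} {M : Matroid α} {I J X Y R : Set α} {e : α}

/-- Rank function (into `ℕ∞`). -/
noncomputable def rk (M : Matroid α) (X : Set α) : ℕ∞ :=
  (M.exists_isBasis' X).choose.encard

lemma rk_eq_of_basis' (hJ : M.IsBasis' J X) : rk M X = J.encard :=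
  (M.exists_isBasis' X).choose_spec.encard_eq_encard hJ

lemma rk_eq_of_basis (hJ : M.IsBasis J X) : rk M X = J.encard :=
  rk_eq_of_basis' hJ.isBasis'

lemma encard_le_rk (hI : M.Indep I) (hIX : I ⊆ X) : I.encard ≤ rk M X := by
  obtain ⟨J, hJ, hIJ⟩ := hI.subset_isBasis'_of_subset hIX
  rw [rk_eq_of_basis' hJ]
  exact encard_le_encard hIJ

lemma rk_empty (M : Matroid α) : rk M ∅ = 0 := by
  rw [rk_eq_of_basis ((Matroid.isBasis_empty_iff M).2 rfl), encard_empty]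

lemma rk_submod (M : Matroid α) (hX : X ⊆ M.E) (hY : Y ⊆ M.E) :
    rk M (X ∪ Y) + rk M (X ∩ Y) ≤ rk M X + rk M Y := by
  obtain ⟨I, hI⟩ := M.exists_isBasis (X ∩ Y) (inter_subset_left.trans hX)
  obtain ⟨J, hJ, hIJ⟩ := hI.indep.subset_isBasis_of_subset
    (hI.subset.trans (inter_subset_left.trans subset_union_left)) (union_subset hX hY)
  rw [rk_eq_of_basis hJ, rk_eq_of_basis hI]
  have h1 : (J ∩ X).encard ≤ rk M X := encard_le_rk (hJ.indep.inter_right X) inter_subset_right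
  have h2 : (J ∩ Y).encard ≤ rk M Y := encard_le_rk (hJ.indep.inter_right Y) inter_subset_right
  have hJu : (J ∩ X) ∪ (J ∩ Y) = J := by
    rw [← inter_union_distrib_left, inter_eq_self_of_subset_left hJ.subset]
  have hJi : I ⊆ (J ∩ X) ∩ (J ∩ Y) := by
    rw [← inter_inter_distrib_left]
    exact subset_inter hIJ hI.subset
  calc J.encard + I.encard ≤ ((J ∩ X) ∪ (J ∩ Y)).encard + ((J ∩ X) ∩ (J ∩ Y)).encard := by
        rw [hJu]; exact add_le_add_right (encard_le_encard hJi) _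
    _ = (J ∩ X).encard + (J ∩ Y).encard := encard_union_add_encard_inter _ _
    _ ≤ rk M X + rk M Y := add_le_add h1 h2

lemma rk_insert_of_mem_closure (hX : X ⊆ M.E) (he : e ∈ M.closure X) :
    rk M (insert e X) = rk M X := by
  obtain ⟨J, hJ⟩ := M.exists_isBasis X hX
  have heJ : e ∈ M.closure J := by
    rwa [← Matroid.closure_closure, ← hJ.closure_eq_closure, Matroid.closure_closure] at he
  have hJ' : M.IsBasis J (insert e X) :=
    hJ.indep.isBasis_of_subset_of_subset_closure (hJ.subset.trans (subset_insert _ _))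
      (insert_subset heJ (hJ.subset_closure))
  rw [rk_eq_of_basis hJ', rk_eq_of_basis hJ]

lemma rk_restrict (M : Matroid α) (hXR : X ⊆ R) (hR : R ⊆ M.E) : rk (M ↾ R) X = rk M X := by
  obtain ⟨J, hJ⟩ := (M ↾ R).exists_isBasis X (by rwa [Matroid.restrict_ground_eq])
  have hJi : M.Indep J ∧ J ⊆ R := Matroid.restrict_indep_iff.1 hJ.indep
  have hJM : M.IsBasis J X := by
    refine hJi.1.isBasis_of_subset_of_subset_closure hJ.subset (fun x hx => ?_)
    by_cases hxJ : x ∈ J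
    · exact M.subset_closure J (hJi.1.subset_ground) hxJ
    have hdep : ¬ (M ↾ R).Indep (insert x J) := hJ.isBasis'.insert_not_indep ⟨hx, hxJ⟩
    rw [Matroid.restrict_indep_iff, not_and_or] at hdep
    have hxR : insert x J ⊆ R := insert_subset (hXR hx) hJi.2
    have : ¬ M.Indep (insert x J) := by tauto
    have := (hJi.1.insert_indep_iff_of_notMem hxJ).not.1 this
    simp only [mem_diff, not_and, not_not] at this
    exact this (hR (hXR hx))
  rw [rk_eq_of_basis hJ, rk_eq_of_basis hJM]



/-- Contraction of a finite matroid by a single non-loop element. -/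
noncomputable def con (M : Matroid α) (e : α) (hfin : M.E.Finite) (he : M.Indep {e}) :
    Matroid α :=
  (IndepMatroid.ofFinite (E := M.E \ {e}) (hfin.diff (t := {e}))
    (fun I => e ∉ I ∧ M.Indep (insert e I))
    ⟨notMem_empty e, by simpa using he⟩
    (fun I J hJ hIJ => ⟨fun h => hJ.1 (hIJ h), hJ.2.subset (insert_subset_insert hIJ)⟩)
    (by
      rintro I J ⟨heI, hI⟩ ⟨heJ, hJ⟩ hlt
      have hIfin : I.Finite := hfin.subset ((subset_insert e I).trans hI.subset_ground)
      have hJfin : J.Finite := hfin.subset ((subset_insert e J).trans hJ.subset_ground)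
      have hlt' : (insert e I).encard < (insert e J).encard := by
        rw [encard_insert_of_notMem heI, encard_insert_of_notMem heJ,
          ← hIfin.cast_ncard_eq, ← hJfin.cast_ncard_eq]
        rw [ENat.add_lt_add_iff_right (by simp : (1:ℕ∞) ≠ ⊤)]
        exact_mod_cast hlt
      obtain ⟨x, hx, hxind⟩ := hI.augment hJ hlt'
      obtain ⟨hx1, hx2⟩ := hx
      have hxe : x ≠ e := fun h => hx2 (h ▸ mem_insert e I)
      refine ⟨x, hx1.resolve_left hxe, fun hxI => hx2 (mem_insert_of_mem _ hxI), ?_, ?_⟩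
      · exact fun h => (mem_insert_iff.1 h).elim (fun h' => hxe h'.symm) heI
      · rwa [insert_comm] at hxind)
    (fun I hI => subset_diff_singleton ((subset_insert e I).trans hI.2.subset_ground) hI.1)).matroid

@[simp] lemma con_E (M : Matroid α) (e : α) (hfin : M.E.Finite) (he : M.Indep {e}) :
    (con M e hfin he).E = M.E \ {e} := rfl

@[simp] lemma con_indep_iff (M : Matroid α) (e : α) (hfin : M.E.Finite) (he : M.Indep {e}) :
    (con M e hfin he).Indep I ↔ e ∉ I ∧ M.Indep (insert e I) := by
  simp [con]

lemma con_finite (M : Matroid α) (e : α) (hfin : M.E.Finite) (he : M.Indep {e}) :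
    (con M e hfin he).Finite := ⟨hfin.diff (t := {e})⟩

lemma rk_con (M : Matroid α) (e : α) (hfin : M.E.Finite) (he : M.Indep {e})
    (hX : X ⊆ M.E \ {e}) : rk (con M e hfin he) X + 1 = rk M (insert e X) := by
  obtain ⟨J, hJ⟩ := (con M e hfin he).exists_isBasis X (by rwa [con_E])
  obtain ⟨heJ, hJind⟩ := (con_indep_iff M e hfin he).1 hJ.indep
  have hJM : M.IsBasis (insert e J) (insert e X) := by
    refine hJind.isBasis_of_subset_of_subset_closure (insert_subset_insert hJ.subset) ?_
    rintro x (rfl | hx)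
    · exact M.subset_closure _ hJind.subset_ground (mem_insert _ _)
    by_cases hxJ : x ∈ J
    · exact M.subset_closure _ hJind.subset_ground (mem_insert_of_mem _ hxJ)
    have hxe : x ≠ e := fun h => (hX hx).2 (h ▸ rfl)
    have hdep := hJ.isBasis'.insert_not_indep ⟨hx, hxJ⟩
    rw [con_indep_iff] at hdep
    have heJ' : e ∉ insert x J := fun h =>
      (mem_insert_iff.1 h).elim (fun h' => hxe h'.symm) heJ
    have hnind : ¬ M.Indep (insert x (insert e J)) := by
      rw [insert_comm]; tauto
    have hxJe : x ∉ insert e J := fun h =>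
      (mem_insert_iff.1 h).elim hxe hxJ
    have := (hJind.insert_indep_iff_of_notMem hxJe).not.1 hnind
    simp only [mem_diff, not_and, not_not] at this
    exact this (hX hx).1
  rw [rk_eq_of_basis hJ, rk_eq_of_basis hJM, encard_insert_of_notMem heJ]



theorem exists_common_ind (n : ℕ) :
    ∀ (M₀ M₁ : Matroid α), M₀.E.Finite → M₁.E.Finite → M₀.E = M₁.E → M₀.E.ncard ≤ n →
    ∃ I A, M₀.Indep I ∧ M₁.Indep I ∧ A ⊆ M₀.E ∧
      rk M₀ A + rk M₁ (M₀.E \ A) ≤ I.encard := by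
  induction n with
  | zero =>
    intro M₀ M₁ h₀ h₁ hE hn
    have hE0 : M₀.E = ∅ := (Set.ncard_eq_zero h₀).1 (Nat.le_zero.1 hn)
    exact ⟨∅, ∅, M₀.empty_indep, M₁.empty_indep, empty_subset _, by
      simp [hE0, rk_empty]⟩
  | succ n IH =>
    intro M₀ M₁ h₀ h₁ hE hn
    rcases eq_empty_or_nonempty M₀.E with hE0 | ⟨e, he⟩
    · exact ⟨∅, ∅, M₀.empty_indep, M₁.empty_indep, empty_subset _, by
        simp [hE0, rk_empty]⟩
    have he₁ : e ∈ M₁.E := hE ▸ he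
    have hcard : (M₀.E \ {e}).ncard ≤ n := by
      have := Set.ncard_diff_singleton_lt_of_mem he h₀
      omega
    -- the deletion pair
    have hdel : ∃ I A, M₀.Indep I ∧ M₁.Indep I ∧ A ⊆ M₀.E \ {e} ∧
        rk M₀ A + rk M₁ ((M₀.E \ {e}) \ A) ≤ I.encard := by
      obtain ⟨I, A, hI0, hI1, hA, hrk⟩ := IH (M₀ ↾ (M₀.E \ {e})) (M₁ ↾ (M₀.E \ {e}))
        (h₀.diff (t := {e})) (h₀.diff (t := {e})) rfl (by simpa using hcard)
      rw [Matroid.restrict_ground_eq] at hA hrk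
      rw [Matroid.restrict_indep_iff] at hI0 hI1
      rw [rk_restrict M₀ hA diff_subset,
        rk_restrict M₁ diff_subset (by rw [hE] at *; exact diff_subset)] at hrk
      exact ⟨I, A, hI0.1, hI1.1, hA, hrk⟩
    obtain ⟨I, A, hI0, hI1, hA, hrk⟩ := hdel
    have hA' : A ⊆ M₀.E := hA.trans diff_subset
    have hAe : e ∉ A := fun h => (hA h).2 rfl
    by_cases hl0 : e ∈ M₀.closure ∅
    · -- e is a loop of M₀
      refine ⟨I, insert e A, hI0, hI1, insert_subset he hA', ?_⟩
      have h1 : rk M₀ (insert e A) = rk M₀ A :=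
        rk_insert_of_mem_closure hA' (M₀.closure_subset_closure (empty_subset A) hl0)
      have h2 : M₀.E \ insert e A = (M₀.E \ {e}) \ A := by
        rw [diff_diff, singleton_union]
      rw [h1, h2]; exact hrk
    by_cases hl1 : e ∈ M₁.closure ∅
    · -- e is a loop of M₁
      refine ⟨I, A, hI0, hI1, hA', ?_⟩
      have h2 : M₀.E \ A = insert e ((M₀.E \ {e}) \ A) := by
        rw [diff_diff_comm, insert_diff_singleton, insert_eq_of_mem (show e ∈ M₀.E \ A from ⟨he, hAe⟩)]
      have h1 : rk M₁ (insert e ((M₀.E \ {e}) \ A)) = rk M₁ ((M₀.E \ {e}) \ A) :=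
        rk_insert_of_mem_closure (by rw [← hE]; exact diff_subset.trans diff_subset)
          (M₁.closure_subset_closure (empty_subset _) hl1)
      rw [h2, h1]; exact hrk
    -- e is a non-loop of both
    have he₀' : M₀.Indep {e} := by
      have := (M₀.empty_indep.insert_indep_iff_of_notMem (notMem_empty e)).2 ⟨he, hl0⟩
      simpa using this
    have he₁' : M₁.Indep {e} := by
      have := (M₁.empty_indep.insert_indep_iff_of_notMem (notMem_empty e)).2 ⟨he₁, hl1⟩
      simpa using this
    -- the contraction pair
    obtain ⟨Ic, B, hc0, hc1, hB, hrkc⟩ := IH (con M₀ e h₀ he₀') (con M₁ e h₁ he₁')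
      (h₀.diff (t := {e})) (h₁.diff (t := {e})) (by rw [con_E, con_E, hE]) (by simpa using hcard)
    rw [con_E] at hB hrkc
    rw [con_indep_iff] at hc0 hc1
    obtain ⟨heIc, hc0⟩ := hc0
    obtain ⟨-, hc1⟩ := hc1
    have hBe : e ∉ B := fun h => (hB h).2 rfl
    have hB' : B ⊆ M₀.E := hB.trans diff_subset
    have hB₁ : (M₀.E \ {e}) \ B ⊆ M₁.E \ {e} := by
      rw [← hE]; exact diff_subset
    have hrkc2 : rk M₀ (insert e B) + rk M₁ (M₀.E \ B) ≤ Ic.encard + 2 := by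
      have e1 := rk_con M₀ e h₀ he₀' hB
      have e2 := rk_con M₁ e h₁ he₁' hB₁
      have h2 : insert e ((M₀.E \ {e}) \ B) = M₀.E \ B := by
        rw [diff_diff_comm, insert_diff_singleton, insert_eq_of_mem (show e ∈ M₀.E \ B from ⟨he, hBe⟩)]
      rw [h2] at e2
      calc rk M₀ (insert e B) + rk M₁ (M₀.E \ B)
          = (rk (con M₀ e h₀ he₀') B + 1) + (rk (con M₁ e h₁ he₁') ((M₀.E \ {e}) \ B) + 1) := by
            rw [e1, e2]
        _ = (rk (con M₀ e h₀ he₀') B + rk (con M₁ e h₁ he₁') ((M₀.E \ {e}) \ B)) + 2 := by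
            ring
        _ ≤ Ic.encard + 2 := add_le_add_left hrkc 2
    -- submodularity
    set C := A ∩ B with hC
    set D := A ∪ insert e B with hD
    have hCE : C ⊆ M₀.E := inter_subset_left.trans hA'
    have hDE : D ⊆ M₀.E := union_subset hA' (insert_subset he hB')
    have hs0 : rk M₀ D + rk M₀ C ≤ rk M₀ A + rk M₀ (insert e B) := by
      have h2 : A ∩ insert e B = C := by
        ext x; simp only [hC, mem_inter_iff, mem_insert_iff]
        constructor
        · rintro ⟨hx, rfl | hx'⟩
          · exact absurd hx hAe
          · exact ⟨hx, hx'⟩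
        · rintro ⟨hx, hx'⟩; exact ⟨hx, Or.inr hx'⟩
      have := rk_submod M₀ hA' (insert_subset he hB')
      rwa [h2] at this
    have hs1 : rk M₁ (M₀.E \ C) + rk M₁ (M₀.E \ D) ≤
        rk M₁ ((M₀.E \ {e}) \ A) + rk M₁ (M₀.E \ B) := by
      have hu : ((M₀.E \ {e}) \ A) ∪ (M₀.E \ B) = M₀.E \ C := by
        ext x
        simp only [mem_union, mem_diff, mem_singleton_iff, hC, mem_inter_iff]
        constructor
        · rintro (⟨⟨hx, -⟩, hx'⟩ | ⟨hx, hx'⟩)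
          · exact ⟨hx, fun h => hx' h.1⟩
          · exact ⟨hx, fun h => hx' h.2⟩
        · rintro ⟨hx, hx'⟩
          by_cases hxB : x ∈ B
          · exact Or.inl ⟨⟨hx, fun h => hBe (h ▸ hxB)⟩, fun h => hx' ⟨h, hxB⟩⟩
          · exact Or.inr ⟨hx, hxB⟩
      have hi : ((M₀.E \ {e}) \ A) ∩ (M₀.E \ B) = M₀.E \ D := by
        ext x
        simp only [mem_inter_iff, mem_diff, mem_singleton_iff, hD, mem_union, mem_insert_iff]
        constructor
        · rintro ⟨⟨⟨hx, hxe⟩, hxA⟩, -, hxB⟩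
          exact ⟨hx, fun h => h.elim hxA (fun h' => h'.elim hxe hxB)⟩
        · rintro ⟨hx, hx'⟩
          push_neg at hx'
          exact ⟨⟨⟨hx, hx'.2.1⟩, hx'.1⟩, hx, hx'.2.2⟩
      have hX1 : (M₀.E \ {e}) \ A ⊆ M₁.E := by rw [← hE]; exact diff_subset.trans diff_subset
      have hY1 : M₀.E \ B ⊆ M₁.E := by rw [← hE]; exact diff_subset
      have := rk_submod M₁ hX1 hY1
      rwa [hu, hi] at this
    have key : (rk M₀ C + rk M₁ (M₀.E \ C)) + (rk M₀ D + rk M₁ (M₀.E \ D)) ≤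
        I.encard + (Ic.encard + 2) := by
      calc (rk M₀ C + rk M₁ (M₀.E \ C)) + (rk M₀ D + rk M₁ (M₀.E \ D))
          = (rk M₀ D + rk M₀ C) + (rk M₁ (M₀.E \ C) + rk M₁ (M₀.E \ D)) := by ring
        _ ≤ (rk M₀ A + rk M₀ (insert e B)) +
            (rk M₁ ((M₀.E \ {e}) \ A) + rk M₁ (M₀.E \ B)) := add_le_add hs0 hs1
        _ = (rk M₀ A + rk M₁ ((M₀.E \ {e}) \ A)) +
            (rk M₀ (insert e B) + rk M₁ (M₀.E \ B)) := by ring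
        _ ≤ I.encard + (Ic.encard + 2) := add_le_add hrk hrkc2
    by_cases hgood : rk M₀ C + rk M₁ (M₀.E \ C) ≤ I.encard
    · exact ⟨I, C, hI0, hI1, hCE, hgood⟩
    · have hIfin : I.encard ≠ ⊤ := (h₀.subset hI0.subset_ground).encard_lt_top.ne
      have hlt : I.encard + 1 ≤ rk M₀ C + rk M₁ (M₀.E \ C) :=
        Order.add_one_le_of_lt (not_le.1 hgood)
      have : (I.encard + 1) + (rk M₀ D + rk M₁ (M₀.E \ D)) ≤
          (I.encard + 1) + (Ic.encard + 1) := by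
        calc (I.encard + 1) + (rk M₀ D + rk M₁ (M₀.E \ D))
            ≤ (rk M₀ C + rk M₁ (M₀.E \ C)) + (rk M₀ D + rk M₁ (M₀.E \ D)) :=
              add_le_add_left hlt _
          _ ≤ I.encard + (Ic.encard + 2) := key
          _ = (I.encard + 1) + (Ic.encard + 1) := by ring
      have hD' : rk M₀ D + rk M₁ (M₀.E \ D) ≤ Ic.encard + 1 := by
        rwa [ENat.add_le_add_iff_left (by simp [hIfin] : I.encard + 1 ≠ ⊤)] at this
      refine ⟨insert e Ic, D, hc0, hc1, hDE, ?_⟩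
      rwa [encard_insert_of_notMem heIc]

end MIAux

/-- **Matroid intersection property (finite case).** For finite matroids `M₀, M₁` on `E` there
is a common independent set `I` and a partition `E = E₀ ⊔ E₁` with `I ∩ Eᵢ` spanning `Eᵢ`
in `Mᵢ` for `i ∈ {0,1}`. -/
theorem matroid_intersection {α : Type*} (M₀ M₁ : Matroid α) [M₀.Finite] [M₁.Finite]
    {E : Set α} (hE₀ : M₀.E = E) (hE₁ : M₁.E = E) :
    ∃ I, M₀.Indep I ∧ M₁.Indep I ∧
      ∃ E₀ E₁ : Set α, E₀ ∪ E₁ = E ∧ Disjoint E₀ E₁ ∧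
        E₀ ⊆ M₀.closure (I ∩ E₀) ∧ E₁ ⊆ M₁.closure (I ∩ E₁) := by
  obtain ⟨I, A, hI0, hI1, hA, hrk⟩ := MIAux.exists_common_ind M₀.E.ncard M₀ M₁
    M₀.ground_finite M₁.ground_finite (hE₀.trans hE₁.symm) le_rfl
  rw [hE₀] at hA hrk
  have hIE : I ⊆ E := hE₀ ▸ hI0.subset_ground
  have hEfin : E.Finite := hE₀ ▸ M₀.ground_finite
  -- bases of the two sides extending the two halves of I
  obtain ⟨J₀, hJ₀, hIJ₀⟩ := (hI0.inter_right A).subset_isBasis_of_subset inter_subset_right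
    (by rw [hE₀]; exact hA)
  obtain ⟨J₁, hJ₁, hIJ₁⟩ := (hI1.inter_right (E \ A)).subset_isBasis_of_subset inter_subset_right
    (by rw [hE₁]; exact diff_subset)
  have hb0 : MIAux.rk M₀ A = J₀.encard := MIAux.rk_eq_of_basis hJ₀
  have hb1 : MIAux.rk M₁ (E \ A) = J₁.encard := MIAux.rk_eq_of_basis hJ₁
  have hsplit : (I ∩ A).encard + (I ∩ (E \ A)).encard = I.encard := by
    have h1 : I ∩ (E \ A) = I \ A := by
      ext x; exact ⟨fun h => ⟨h.1, h.2.2⟩, fun h => ⟨h.1, hIE h.1, h.2⟩⟩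
    rw [h1, add_comm, encard_diff_add_encard_inter]
  have ha0 : (I ∩ A).encard ≤ J₀.encard := encard_le_encard hIJ₀
  have ha1 : (I ∩ (E \ A)).encard ≤ J₁.encard := encard_le_encard hIJ₁
  have hJ₀fin : J₀.Finite := hEfin.subset (hJ₀.subset.trans hA)
  have hJ₁fin : J₁.Finite := hEfin.subset (hJ₁.subset.trans diff_subset)
  have hrk' : J₀.encard + J₁.encard ≤ (I ∩ A).encard + (I ∩ (E \ A)).encard := by
    rw [hsplit, ← hb0, ← hb1]; exact hrk
  -- both inequalities are equalities
  have heq0 : J₀.encard ≤ (I ∩ A).encard := by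
    have : J₀.encard + J₁.encard ≤ (I ∩ A).encard + J₁.encard :=
      hrk'.trans (add_le_add_right ha1 _)
    rwa [ENat.add_le_add_iff_right hJ₁fin.encard_lt_top.ne] at this
  have heq1 : J₁.encard ≤ (I ∩ (E \ A)).encard := by
    have : J₁.encard + J₀.encard ≤ (I ∩ (E \ A)).encard + J₀.encard := by
      calc J₁.encard + J₀.encard = J₀.encard + J₁.encard := add_comm _ _
        _ ≤ (I ∩ A).encard + (I ∩ (E \ A)).encard := hrk'
        _ = (I ∩ (E \ A)).encard + (I ∩ A).encard := add_comm _ _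
        _ ≤ (I ∩ (E \ A)).encard + J₀.encard := add_le_add_right ha0 _
    rwa [ENat.add_le_add_iff_right hJ₀fin.encard_lt_top.ne] at this
  have hJ₀eq : I ∩ A = J₀ := hJ₀fin.eq_of_subset_of_encard_le' hIJ₀ heq0
  have hJ₁eq : I ∩ (E \ A) = J₁ := hJ₁fin.eq_of_subset_of_encard_le' hIJ₁ heq1
  refine ⟨I, hI0, hI1, A, E \ A, union_diff_cancel hA, disjoint_sdiff_right, ?_, ?_⟩
  · rw [hJ₀eq]; exact hJ₀.subset_closure
  · rw [hJ₁eq]; exact hJ₁.subset_closure
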